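/- Let T be a plane tree whose child sequence has no entries equal to 1 (every internal node has at least 2 children). For a node u of T at depth |u|, let λ(u) and ρ(u) be the indices of u in lexicographic DFS order and reverse-lexicographic DFS order respectively, and let Q^l, Q^r be the corresponding queue processes. Then max(Q^l_{λ(u)}(T), Q^r_{ρ(u)}(T)) ≥ |u|/2. -/

import Mathlib

/-- A plane (rooted ordered) tree: a root together with an ordered list of subtrees. -/
inductive PlaneTree where
  | node : List PlaneTree → PlaneTree

namespace PlaneTree

/-- Number of nodes. -/
def size : PlaneTree → ℕ
  | node l => 1 + (l.attach.map fun t => size t.1).sum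
decreasing_by simp only [PlaneTree.node.sizeOf_spec]; have := List.sizeOf_lt_of_mem t.2; omega

/-- The multiset of the numbers of children of the nodes of a plane tree. -/
def childCounts : PlaneTree → Multiset ℕ
  | node l => l.length ::ₘ (l.attach.map fun t => childCounts t.1).sum
decreasing_by simp only [PlaneTree.node.sizeOf_spec]; have := List.sizeOf_lt_of_mem t.2; omega

/-- Number of nodes at depth `k`. -/
def nodesAt : ℕ → PlaneTree → ℕ
  | 0, _ => 1
  | k + 1, node l => (l.map (nodesAt k)).sum

/-- Width: maximum number of nodes at any single depth. -/
noncomputable def width (T : PlaneTree) : ℕ := sSup (Set.range fun k => nodesAt k T)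

/-- Height: greatest depth of any node. -/
noncomputable def height (T : PlaneTree) : ℕ := sSup {k | nodesAt k T ≠ 0}

/-- `T` has child sequence `c` iff the multiset of child-counts of its nodes is
the multiset of entries of `c`. -/
def hasChildSeq {n : ℕ} (c : Fin n → ℕ) (T : PlaneTree) : Prop :=
  childCounts T = Multiset.map c Finset.univ.val


/-- Child-counts of the nodes of a forest in lexicographic depth-first order. -/
def lexDfsSeq : List PlaneTree → List ℕ
  | [] => []
  | node l :: ts => l.length :: lexDfsSeq (l ++ ts)
termination_by l => (l.map size).sum
decreasing_by
  simp only [List.map_append, List.sum_append, List.map_cons, List.sum_cons, size]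
  have : (l.attach.map fun t => size t.1).sum = (l.map size).sum := by
    congr 1; simp [List.attach_map_val]
  omega

/-- Child-counts of the nodes of a forest in reverse-lexicographic depth-first
order (lex-DFS of the mirror image). -/
def revDfsSeq : List PlaneTree → List ℕ
  | [] => []
  | node l :: ts => l.length :: revDfsSeq (l.reverse ++ ts)
termination_by l => (l.map size).sum
decreasing_by
  simp only [List.map_append, List.sum_append, List.map_cons, List.sum_cons, size,
    List.map_reverse, List.sum_reverse, List.unattach_reverse, List.unattach_attach]
  have : (l.attach.map fun t => size t.1).sum = (l.map size).sum := by
    congr 1; simp [List.attach_map_val]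
  omega

/-- The queue process associated to an exploration child-count sequence `s`:
`Q_0 = 1`, `Q_i = Q_{i-1} - 1 + s_i`. -/
def queue (s : List ℕ) (i : ℕ) : ℤ := 1 + ∑ j ∈ Finset.range i, ((s.getD j 1 : ℤ) - 1)

/-- The subtree of `T` rooted at the node with Ulam–Harris address `p`
(a list of child indices), if it exists. -/
def subtreeAt : PlaneTree → List ℕ → Option PlaneTree
  | t, [] => some t
  | node l, i :: p =>
    match l[i]? with
    | some t => subtreeAt t p
    | none => none
termination_by _ p => p.length

/-- The (1-based) index `λ(u)` of the node `u` in the lex-DFS order of `T`: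
lex-DFS visits the addresses in lexicographic order, prefixes first. -/
noncomputable def lexIdx (T : PlaneTree) (u : List ℕ) : ℕ :=
  {v : List ℕ | (subtreeAt T v).isSome ∧ (List.Lex (· < ·) v u ∨ v = u)}.ncard

/-- The (1-based) index `ρ(u)` of the node `u` in the rev-DFS order of `T`. -/
noncomputable def revIdx (T : PlaneTree) (u : List ℕ) : ℕ :=
  {v : List ℕ | (subtreeAt T v).isSome ∧ (List.Lex (· > ·) v u ∨ v = u)}.ncard

end PlaneTree

namespace PlaneTree

theorem size_node (l : List PlaneTree) : size (node l) = 1 + (l.map size).sum := by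
  rw [size]; congr 1; simp [List.attach_map_val]

theorem subtreeAt_nil (T : PlaneTree) : subtreeAt T [] = some T := by rw [subtreeAt]

theorem subtreeAt_cons_some {l : List PlaneTree} {j : ℕ} {t : PlaneTree} (h : l[j]? = some t)
    (q : List ℕ) : subtreeAt (node l) (j :: q) = subtreeAt t q := by rw [subtreeAt, h]

theorem subtreeAt_cons_none {l : List PlaneTree} {j : ℕ} (h : l[j]? = none)
    (q : List ℕ) : subtreeAt (node l) (j :: q) = none := by rw [subtreeAt, h]

theorem isSome_subtreeAt_cons {l : List PlaneTree} {j : ℕ} {q : List ℕ} :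
    (subtreeAt (node l) (j :: q)).isSome ↔
      ∃ t, l[j]? = some t ∧ (subtreeAt t q).isSome := by
  cases h : l[j]? with
  | none => simp [subtreeAt_cons_none h]
  | some t => simp [subtreeAt_cons_some h]

/-- Valid addresses of `T`. -/
def VS (T : PlaneTree) : Set (List ℕ) := {v | (subtreeAt T v).isSome}

/-- Valid non-root addresses of the forest `l` with head index `< m`. -/
def DS (l : List PlaneTree) (m : ℕ) : Set (List ℕ) :=
  {v | ∃ j < m, ∃ t, l[j]? = some t ∧ ∃ q ∈ VS t, v = j :: q}

theorem VS_node (l : List PlaneTree) : VS (node l) = insert [] (DS l l.length) := by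
  ext v
  cases v with
  | nil => simp [VS, DS, subtreeAt_nil]
  | cons j q =>
    simp only [VS, Set.mem_setOf_eq, isSome_subtreeAt_cons, Set.mem_insert_iff, DS]
    constructor
    · rintro ⟨t, ht, hq⟩
      exact Or.inr ⟨j, by simpa using (List.getElem?_eq_some_iff.mp ht).1, t, ht, q, hq, rfl⟩
    · rintro (h | ⟨j', _, t, ht, q', hq', h⟩)
      · exact absurd h (by simp)
      · obtain ⟨rfl, rfl⟩ : j = j' ∧ q = q' := by simpa using h
        exact ⟨t, ht, hq'⟩

theorem DS_card_aux (l : List PlaneTree)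
    (H : ∀ t ∈ l, (VS t).Finite ∧ (VS t).ncard = size t) :
    ∀ m, (DS l m).Finite ∧ (DS l m).ncard = ((l.take m).map size).sum := by
  intro m
  induction m with
  | zero => simp [DS]
  | succ m ih =>
    cases h : l[m]? with
    | none =>
      have hlen : l.length ≤ m := by simpa using List.getElem?_eq_none_iff.mp h
      have : DS l (m + 1) = DS l m := by
        ext v
        simp only [DS, Set.mem_setOf_eq]
        constructor
        · rintro ⟨j, hj, t, ht, rest⟩
          have hjl : j < l.length := (List.getElem?_eq_some_iff.mp ht).1
          exact ⟨j, by omega, t, ht, rest⟩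
        · rintro ⟨j, hj, rest⟩; exact ⟨j, by omega, rest⟩
      rw [this, List.take_of_length_le (by omega)]
      rwa [List.take_of_length_le hlen] at ih
    | some t =>
      have hmem : t ∈ l := by
        obtain ⟨hlt, rfl⟩ := List.getElem?_eq_some_iff.mp h
        exact List.getElem_mem hlt
      have hVt := H t hmem
      have hsplit : DS l (m + 1) = DS l m ∪ (fun q => m :: q) '' VS t := by
        ext v
        simp only [DS, Set.mem_setOf_eq, Set.mem_union, Set.mem_image]
        constructor
        · rintro ⟨j, hj, t', ht', q, hq, rfl⟩
          rcases Nat.lt_succ_iff_lt_or_eq.mp hj with hj' | rfl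
          · exact Or.inl ⟨j, hj', t', ht', q, hq, rfl⟩
          · rw [h] at ht'; obtain rfl : t = t' := by simpa using ht'
            exact Or.inr ⟨q, hq, rfl⟩
        · rintro (⟨j, hj, rest⟩ | ⟨q, hq, rfl⟩)
          · exact ⟨j, by omega, rest⟩
          · exact ⟨m, by omega, t, h, q, hq, rfl⟩
      have hdisj : Disjoint (DS l m) ((fun q => m :: q) '' VS t) := by
        rw [Set.disjoint_left]
        rintro v ⟨j, hj, t', ht', q, hq, rfl⟩ ⟨q', hq', hv⟩
        obtain ⟨rfl, rfl⟩ : m = j ∧ q' = q := by simpa using hv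
        omega
      have hfin2 : ((fun q => m :: q) '' VS t).Finite := hVt.1.image _
      have hinj : Set.InjOn (fun q => m :: q) (VS t) := fun a _ b _ hab => by
        simpa using hab
      rw [hsplit]
      refine ⟨ih.1.union hfin2, ?_⟩
      rw [Set.ncard_union_eq hdisj ih.1 hfin2, Set.ncard_image_of_injOn hinj,
        ih.2, hVt.2, List.take_succ, h]
      simp

theorem VS_card (T : PlaneTree) : (VS T).Finite ∧ (VS T).ncard = size T := by
  obtain ⟨l⟩ := T
  have H : ∀ t ∈ l, (VS t).Finite ∧ (VS t).ncard = size t := fun t ht => VS_card t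
  obtain ⟨hf, hc⟩ := DS_card_aux l H l.length
  have hnil : ([] : List ℕ) ∉ DS l l.length := by
    rintro ⟨j, _, t, _, q, _, h⟩; cases h
  rw [VS_node, size_node]
  refine ⟨hf.insert _, ?_⟩
  rw [Set.ncard_insert_of_notMem hnil hf, hc, List.take_length]
  omega
termination_by sizeOf T
decreasing_by
  simp only [PlaneTree.node.sizeOf_spec]
  have := List.sizeOf_lt_of_mem ht; omega

theorem DS_card (l : List PlaneTree) (m : ℕ) :
    (DS l m).Finite ∧ (DS l m).ncard = ((l.take m).map size).sum :=
  DS_card_aux l (fun t _ => VS_card t) m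

/-- Valid non-root addresses of the forest `l` with head index `≥ i`. -/
def ES (l : List PlaneTree) (i : ℕ) : Set (List ℕ) :=
  {v | ∃ j, i ≤ j ∧ ∃ t, l[j]? = some t ∧ ∃ q ∈ VS t, v = j :: q}

theorem ES_zero (l : List PlaneTree) : ES l 0 = DS l l.length := by
  ext v
  simp only [ES, DS, Set.mem_setOf_eq]
  constructor
  · rintro ⟨j, _, t, ht, rest⟩
    exact ⟨j, (List.getElem?_eq_some_iff.mp ht).1, t, ht, rest⟩
  · rintro ⟨j, _, rest⟩
    exact ⟨j, Nat.zero_le _, rest⟩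

theorem ES_cons (a : PlaneTree) (l : List PlaneTree) (i : ℕ) :
    ES (a :: l) (i + 1) = (fun v => (v.headI + 1) :: v.tail) '' ES l i := by
  ext v
  simp only [ES, Set.mem_setOf_eq, Set.mem_image]
  constructor
  · rintro ⟨j, hj, t, ht, q, hq, rfl⟩
    obtain ⟨j', rfl⟩ : ∃ j', j = j' + 1 := ⟨j - 1, by omega⟩
    rw [List.getElem?_cons_succ] at ht
    exact ⟨j' :: q, ⟨j', by omega, t, ht, q, hq, rfl⟩, rfl⟩
  · rintro ⟨w, ⟨j, hj, t, ht, q, hq, rfl⟩, rfl⟩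
    exact ⟨j + 1, by omega, t, by simpa using ht, q, hq, rfl⟩

theorem ES_card (l : List PlaneTree) (i : ℕ) :
    (ES l i).Finite ∧ (ES l i).ncard = ((l.drop i).map size).sum := by
  induction l generalizing i with
  | nil =>
    have : ES [] i = ∅ := by
      ext v; simp only [ES, Set.mem_setOf_eq, Set.mem_empty_iff_false, iff_false]
      rintro ⟨j, hj, t, ht, _⟩; simp at ht
    simp [this]
  | cons a l ih =>
    cases i with
    | zero =>
      rw [ES_zero, List.drop_zero]
      obtain ⟨hf, hc⟩ := DS_card (a :: l) (a :: l).length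
      rw [List.take_length] at hc
      exact ⟨hf, hc⟩
    | succ i =>
      obtain ⟨hf, hc⟩ := ih i
      rw [ES_cons]
      have hinj : Set.InjOn (fun v => (v.headI + 1) :: v.tail) (ES l i) := by
        rintro v1 ⟨j1, _, _, _, q1, _, rfl⟩ v2 ⟨j2, _, _, _, q2, _, rfl⟩ h
        simp only [List.headI, List.tail, List.cons.injEq] at h
        obtain ⟨h1, h2⟩ := h
        simp [h2]; omega
      exact ⟨hf.image _, by rw [Set.ncard_image_of_injOn hinj, hc]; simp⟩

/-- The set whose cardinality is `lexIdx`. -/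
def AS (T : PlaneTree) (u : List ℕ) : Set (List ℕ) :=
  {v : List ℕ | (subtreeAt T v).isSome ∧ (List.Lex (· < ·) v u ∨ v = u)}

theorem lexIdx_eq (T : PlaneTree) (u : List ℕ) : lexIdx T u = (AS T u).ncard := rfl

/-- The set whose cardinality is `revIdx`. -/
def BS (T : PlaneTree) (u : List ℕ) : Set (List ℕ) :=
  {v : List ℕ | (subtreeAt T v).isSome ∧ (List.Lex (· > ·) v u ∨ v = u)}

theorem revIdx_eq (T : PlaneTree) (u : List ℕ) : revIdx T u = (BS T u).ncard := rfl

theorem lex_cons_iff {r : ℕ → ℕ → Prop} {a b : ℕ} {q p : List ℕ} :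
    List.Lex r (a :: q) (b :: p) ↔ r a b ∨ (a = b ∧ List.Lex r q p) := by
  constructor
  · intro h
    cases h with
    | cons h => exact Or.inr ⟨rfl, h⟩
    | rel h => exact Or.inl h
  · rintro (h | ⟨rfl, h⟩)
    · exact List.Lex.rel h
    · exact List.Lex.cons h

theorem AS_subset_VS (T : PlaneTree) (u : List ℕ) : AS T u ⊆ VS T := fun v hv => hv.1

theorem BS_subset_VS (T : PlaneTree) (u : List ℕ) : BS T u ⊆ VS T := fun v hv => hv.1

theorem AS_finite (T : PlaneTree) (u : List ℕ) : (AS T u).Finite :=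
  (VS_card T).1.subset (AS_subset_VS T u)

theorem BS_finite (T : PlaneTree) (u : List ℕ) : (BS T u).Finite :=
  (VS_card T).1.subset (BS_subset_VS T u)

theorem lexIdx_le_size (T : PlaneTree) (u : List ℕ) : lexIdx T u ≤ size T := by
  rw [lexIdx_eq, ← (VS_card T).2]
  exact Set.ncard_le_ncard (AS_subset_VS T u) (VS_card T).1

theorem revIdx_le_size (T : PlaneTree) (u : List ℕ) : revIdx T u ≤ size T := by
  rw [revIdx_eq, ← (VS_card T).2]
  exact Set.ncard_le_ncard (BS_subset_VS T u) (VS_card T).1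

theorem lexIdx_nil (T : PlaneTree) : lexIdx T [] = 1 := by
  rw [lexIdx_eq]
  have : AS T [] = {[]} := by
    ext v
    simp only [AS, Set.mem_setOf_eq, Set.mem_singleton_iff]
    constructor
    · rintro ⟨_, h | rfl⟩
      · cases h
      · rfl
    · rintro rfl
      exact ⟨by simp [subtreeAt_nil], Or.inr rfl⟩
  rw [this, Set.ncard_singleton]

theorem revIdx_nil (T : PlaneTree) : revIdx T [] = 1 := by
  rw [revIdx_eq]
  have : BS T [] = {[]} := by
    ext v
    simp only [BS, Set.mem_setOf_eq, Set.mem_singleton_iff]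
    constructor
    · rintro ⟨_, h | rfl⟩
      · cases h
      · rfl
    · rintro rfl
      exact ⟨by simp [subtreeAt_nil], Or.inr rfl⟩
  rw [this, Set.ncard_singleton]

theorem AS_cons {l : List PlaneTree} {i : ℕ} {t : PlaneTree} (h : l[i]? = some t)
    (p : List ℕ) :
    AS (node l) (i :: p) = insert [] (DS l i ∪ (fun q => i :: q) '' AS t p) := by
  ext v
  cases v with
  | nil =>
    simp only [AS, Set.mem_setOf_eq, Set.mem_insert_iff]
    exact ⟨fun _ => Or.inl trivial, fun _ => ⟨by simp [subtreeAt_nil], Or.inl List.Lex.nil⟩⟩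
  | cons j q =>
    simp only [AS, Set.mem_setOf_eq, Set.mem_insert_iff, Set.mem_union, Set.mem_image,
      isSome_subtreeAt_cons, lex_cons_iff, List.cons.injEq, DS, VS]
    constructor
    · rintro ⟨⟨t', ht', hq⟩, hlex⟩
      rcases hlex with (hji | ⟨rfl, hlex⟩) | ⟨rfl, rfl⟩
      · exact Or.inr (Or.inl ⟨j, hji, t', ht', q, hq, rfl, rfl⟩)
      · rw [h] at ht'; obtain rfl : t = t' := by simpa using ht'
        exact Or.inr (Or.inr ⟨q, ⟨hq, Or.inl hlex⟩, rfl, rfl⟩)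
      · rw [h] at ht'; obtain rfl : t = t' := by simpa using ht'
        exact Or.inr (Or.inr ⟨q, ⟨hq, Or.inr rfl⟩, rfl, rfl⟩)
    · rintro (hcontra | (⟨j', hji, t', ht', q', hq', hj, hq⟩ | ⟨q', ⟨hq', hlex⟩, rfl, rfl⟩))
      · simp at hcontra
      · subst hj; subst hq
        exact ⟨⟨t', ht', hq'⟩, Or.inl (Or.inl hji)⟩
      · refine ⟨⟨t, h, hq'⟩, ?_⟩
        rcases hlex with hlex | rfl
        · exact Or.inl (Or.inr ⟨rfl, hlex⟩)
        · exact Or.inr ⟨rfl, rfl⟩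

theorem BS_cons {l : List PlaneTree} {i : ℕ} {t : PlaneTree} (h : l[i]? = some t)
    (p : List ℕ) :
    BS (node l) (i :: p) = insert [] (ES l (i + 1) ∪ (fun q => i :: q) '' BS t p) := by
  ext v
  cases v with
  | nil =>
    simp only [BS, Set.mem_setOf_eq, Set.mem_insert_iff]
    exact ⟨fun _ => Or.inl trivial, fun _ => ⟨by simp [subtreeAt_nil], Or.inl List.Lex.nil⟩⟩
  | cons j q =>
    simp only [BS, Set.mem_setOf_eq, Set.mem_insert_iff, Set.mem_union, Set.mem_image,
      isSome_subtreeAt_cons, lex_cons_iff, List.cons.injEq, ES, VS]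
    constructor
    · rintro ⟨⟨t', ht', hq⟩, hlex⟩
      rcases hlex with (hji | ⟨rfl, hlex⟩) | ⟨rfl, rfl⟩
      · exact Or.inr (Or.inl ⟨j, by omega, t', ht', q, hq, rfl, rfl⟩)
      · rw [h] at ht'; obtain rfl : t = t' := by simpa using ht'
        exact Or.inr (Or.inr ⟨q, ⟨hq, Or.inl hlex⟩, rfl, rfl⟩)
      · rw [h] at ht'; obtain rfl : t = t' := by simpa using ht'
        exact Or.inr (Or.inr ⟨q, ⟨hq, Or.inr rfl⟩, rfl, rfl⟩)
    · rintro (hcontra | (⟨j', hji, t', ht', q', hq', hj, hq⟩ | ⟨q', ⟨hq', hlex⟩, rfl, rfl⟩))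
      · simp at hcontra
      · subst hj; subst hq
        exact ⟨⟨t', ht', hq'⟩, Or.inl (Or.inl (by omega))⟩
      · refine ⟨⟨t, h, hq'⟩, ?_⟩
        rcases hlex with hlex | rfl
        · exact Or.inl (Or.inr ⟨rfl, hlex⟩)
        · exact Or.inr ⟨rfl, rfl⟩

theorem lexIdx_cons {l : List PlaneTree} {i : ℕ} {t : PlaneTree} (h : l[i]? = some t)
    (p : List ℕ) :
    lexIdx (node l) (i :: p) = 1 + ((l.take i).map size).sum + lexIdx t p := by
  rw [lexIdx_eq, AS_cons h p]
  obtain ⟨hDf, hDc⟩ := DS_card l i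
  have hAf : ((fun q => i :: q) '' AS t p).Finite := (AS_finite t p).image _
  have hinj : Set.InjOn (fun q => i :: q) (AS t p) := fun a _ b _ hab => by simpa using hab
  have hdisj : Disjoint (DS l i) ((fun q => i :: q) '' AS t p) := by
    rw [Set.disjoint_left]
    rintro v ⟨j, hj, t', ht', q, hq, rfl⟩ ⟨q', hq', hv⟩
    obtain ⟨rfl, rfl⟩ : i = j ∧ q' = q := by simpa using hv
    omega
  have hnil : ([] : List ℕ) ∉ DS l i ∪ (fun q => i :: q) '' AS t p := by
    rintro (⟨j, _, t', _, q, _, hc⟩ | ⟨q, _, hc⟩) <;> cases hc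
  rw [Set.ncard_insert_of_notMem hnil (hDf.union hAf), Set.ncard_union_eq hdisj hDf hAf,
    Set.ncard_image_of_injOn hinj, hDc, ← lexIdx_eq]
  omega

theorem revIdx_cons {l : List PlaneTree} {i : ℕ} {t : PlaneTree} (h : l[i]? = some t)
    (p : List ℕ) :
    revIdx (node l) (i :: p) = 1 + ((l.drop (i + 1)).map size).sum + revIdx t p := by
  rw [revIdx_eq, BS_cons h p]
  obtain ⟨hEf, hEc⟩ := ES_card l (i + 1)
  have hBf : ((fun q => i :: q) '' BS t p).Finite := (BS_finite t p).image _
  have hinj : Set.InjOn (fun q => i :: q) (BS t p) := fun a _ b _ hab => by simpa using hab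
  have hdisj : Disjoint (ES l (i + 1)) ((fun q => i :: q) '' BS t p) := by
    rw [Set.disjoint_left]
    rintro v ⟨j, hj, t', ht', q, hq, rfl⟩ ⟨q', hq', hv⟩
    obtain ⟨rfl, rfl⟩ : i = j ∧ q' = q := by simpa using hv
    omega
  have hnil : ([] : List ℕ) ∉ ES l (i + 1) ∪ (fun q => i :: q) '' BS t p := by
    rintro (⟨j, _, t', _, q, _, hc⟩ | ⟨q, _, hc⟩) <;> cases hc
  rw [Set.ncard_insert_of_notMem hnil (hEf.union hBf), Set.ncard_union_eq hdisj hEf hBf,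
    Set.ncard_image_of_injOn hinj, hEc, ← revIdx_eq]
  omega


theorem lexDfsSeq_nil : lexDfsSeq [] = [] := by rw [lexDfsSeq]

theorem lexDfsSeq_cons (l : List PlaneTree) (ts : List PlaneTree) :
    lexDfsSeq (node l :: ts) = l.length :: lexDfsSeq (l ++ ts) := by rw [lexDfsSeq]

theorem revDfsSeq_nil : revDfsSeq [] = [] := by rw [revDfsSeq]

theorem revDfsSeq_cons (l : List PlaneTree) (ts : List PlaneTree) :
    revDfsSeq (node l :: ts) = l.length :: revDfsSeq (l.reverse ++ ts) := by rw [revDfsSeq]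

theorem lexDfsSeq_append (as bs : List PlaneTree) :
    lexDfsSeq (as ++ bs) = lexDfsSeq as ++ lexDfsSeq bs := by
  match as with
  | [] => simp [lexDfsSeq_nil]
  | node l :: ts =>
    rw [List.cons_append, lexDfsSeq_cons, lexDfsSeq_cons, ← List.append_assoc,
      lexDfsSeq_append (l ++ ts) bs, List.cons_append]
termination_by (as.map size).sum
decreasing_by
  simp only [List.map_append, List.sum_append, List.map_cons, List.sum_cons, size_node]
  omega

theorem revDfsSeq_append (as bs : List PlaneTree) :
    revDfsSeq (as ++ bs) = revDfsSeq as ++ revDfsSeq bs := by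
  match as with
  | [] => simp [revDfsSeq_nil]
  | node l :: ts =>
    rw [List.cons_append, revDfsSeq_cons, revDfsSeq_cons, ← List.append_assoc,
      revDfsSeq_append (l.reverse ++ ts) bs, List.cons_append]
termination_by (as.map size).sum
decreasing_by
  simp only [List.map_append, List.sum_append, List.map_cons, List.sum_cons, size_node,
    List.map_reverse, List.sum_reverse]
  omega

theorem length_lexDfsSeq (ts : List PlaneTree) :
    (lexDfsSeq ts).length = (ts.map size).sum := by
  match ts with
  | [] => simp [lexDfsSeq_nil]
  | node l :: ts =>
    rw [lexDfsSeq_cons, List.length_cons, length_lexDfsSeq (l ++ ts)]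
    simp only [List.map_append, List.sum_append, List.map_cons, List.sum_cons, size_node]
    omega
termination_by (ts.map size).sum
decreasing_by
  simp only [List.map_append, List.sum_append, List.map_cons, List.sum_cons, size_node]
  omega

theorem length_revDfsSeq (ts : List PlaneTree) :
    (revDfsSeq ts).length = (ts.map size).sum := by
  match ts with
  | [] => simp [revDfsSeq_nil]
  | node l :: ts =>
    rw [revDfsSeq_cons, List.length_cons, length_revDfsSeq (l.reverse ++ ts)]
    simp only [List.map_append, List.sum_append, List.map_cons, List.sum_cons, size_node,
      List.map_reverse, List.sum_reverse]
    omega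
termination_by (ts.map size).sum
decreasing_by
  simp only [List.map_append, List.sum_append, List.map_cons, List.sum_cons, size_node,
    List.map_reverse, List.sum_reverse]
  omega

theorem sum_lexDfsSeq (ts : List PlaneTree) :
    (lexDfsSeq ts).sum + ts.length = (ts.map size).sum := by
  match ts with
  | [] => simp [lexDfsSeq_nil]
  | node l :: ts =>
    have ih := sum_lexDfsSeq (l ++ ts)
    rw [lexDfsSeq_cons]
    simp only [List.map_append, List.sum_append, List.map_cons, List.sum_cons, size_node,
      List.length_append, List.length_cons, List.sum_cons] at ih ⊢
    omega
termination_by (ts.map size).sum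
decreasing_by
  simp only [List.map_append, List.sum_append, List.map_cons, List.sum_cons, size_node]
  omega

theorem sum_revDfsSeq (ts : List PlaneTree) :
    (revDfsSeq ts).sum + ts.length = (ts.map size).sum := by
  match ts with
  | [] => simp [revDfsSeq_nil]
  | node l :: ts =>
    have ih := sum_revDfsSeq (l.reverse ++ ts)
    rw [revDfsSeq_cons]
    simp only [List.map_append, List.sum_append, List.map_cons, List.sum_cons, size_node,
      List.length_append, List.length_cons, List.sum_cons, List.map_reverse,
      List.sum_reverse, List.length_reverse] at ih ⊢
    omega
termination_by (ts.map size).sum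
decreasing_by
  simp only [List.map_append, List.sum_append, List.map_cons, List.sum_cons, size_node,
    List.map_reverse, List.sum_reverse]
  omega

theorem queue_cons (a : ℕ) (s : List ℕ) (n : ℕ) :
    queue (a :: s) (n + 1) = (a : ℤ) - 1 + queue s n := by
  unfold queue
  rw [Finset.sum_range_succ']
  simp only [List.getD_cons_succ, List.getD_cons_zero]
  ring

theorem queue_append_left (s t : List ℕ) (n : ℕ) (h : n ≤ s.length) :
    queue (s ++ t) n = queue s n := by
  unfold queue
  congr 1
  refine Finset.sum_congr rfl fun j hj => ?_
  rw [List.getD_append _ _ _ _ (by have := Finset.mem_range.mp hj; omega)]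

theorem queue_append_full (s t : List ℕ) (n : ℕ) :
    queue (s ++ t) (s.length + n) = queue s s.length + queue t n - 1 := by
  unfold queue
  rw [Finset.sum_range_add]
  have h1 : ∀ j ∈ Finset.range s.length,
      ((s ++ t).getD j 1 : ℤ) - 1 = (s.getD j 1 : ℤ) - 1 := fun j hj => by
    rw [List.getD_append _ _ _ _ (Finset.mem_range.mp hj)]
  have h2 : ∀ j ∈ Finset.range n,
      (((s ++ t).getD (s.length + j) 1 : ℕ) : ℤ) - 1 = (t.getD j 1 : ℤ) - 1 := fun j hj => by
    rw [List.getD_append_right _ _ _ _ (by omega)]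
    simp
  rw [Finset.sum_congr rfl h1, Finset.sum_congr rfl h2]
  ring

theorem queue_self (s : List ℕ) : queue s s.length = 1 + (s.sum : ℤ) - s.length := by
  induction s with
  | nil => simp [queue]
  | cons a s ih =>
    rw [List.length_cons, queue_cons, ih, List.sum_cons]
    push_cast
    ring

theorem queue_lex_full (ts : List PlaneTree) :
    queue (lexDfsSeq ts) ((ts.map size).sum) = 1 - ts.length := by
  have h1 := length_lexDfsSeq ts
  have h2 := sum_lexDfsSeq ts
  rw [← h1, queue_self, h1]
  omega

theorem queue_rev_full (ts : List PlaneTree) :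
    queue (revDfsSeq ts) ((ts.map size).sum) = 1 - ts.length := by
  have h1 := length_revDfsSeq ts
  have h2 := sum_revDfsSeq ts
  rw [← h1, queue_self, h1]
  omega


theorem queue_lex_cons {l : List PlaneTree} {i : ℕ} {t : PlaneTree} (h : l[i]? = some t)
    (p : List ℕ) :
    queue (lexDfsSeq [node l]) (lexIdx (node l) (i :: p)) =
      queue (lexDfsSeq [t]) (lexIdx t p) + ((l.length : ℤ) - 1 - i) := by
  obtain ⟨hi, ht⟩ := List.getElem?_eq_some_iff.mp h
  have hdecomp : l = l.take i ++ ([t] ++ l.drop (i + 1)) := by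
    conv_lhs => rw [← List.take_append_drop i l, List.drop_eq_getElem_cons hi, ht]
    rfl
  have e1 : lexDfsSeq [node l] = l.length :: lexDfsSeq l := by
    rw [lexDfsSeq_cons, List.append_nil]
  have e2 : lexDfsSeq l
      = lexDfsSeq (l.take i) ++ (lexDfsSeq [t] ++ lexDfsSeq (l.drop (i + 1))) := by
    conv_lhs => rw [hdecomp]
    rw [lexDfsSeq_append, lexDfsSeq_append]
  have hlt : (lexDfsSeq (l.take i)).length = ((l.take i).map size).sum := length_lexDfsSeq _
  have hm : lexIdx t p ≤ (lexDfsSeq [t]).length := by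
    rw [length_lexDfsSeq]
    simpa using lexIdx_le_size t p
  have e3 : queue (lexDfsSeq l) (((l.take i).map size).sum + lexIdx t p)
      = (1 - (i : ℤ)) + queue (lexDfsSeq [t]) (lexIdx t p) - 1 := by
    rw [e2, ← hlt, queue_append_full, queue_append_left _ _ _ hm, hlt, queue_lex_full,
      List.length_take, min_eq_left hi.le]
  rw [lexIdx_cons h p, e1,
    show 1 + ((l.take i).map size).sum + lexIdx t p
      = (((l.take i).map size).sum + lexIdx t p) + 1 by omega,
    queue_cons, e3]
  ring

theorem queue_rev_cons {l : List PlaneTree} {i : ℕ} {t : PlaneTree} (h : l[i]? = some t)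
    (p : List ℕ) :
    queue (revDfsSeq [node l]) (revIdx (node l) (i :: p)) =
      queue (revDfsSeq [t]) (revIdx t p) + (i : ℤ) := by
  obtain ⟨hi, ht⟩ := List.getElem?_eq_some_iff.mp h
  have hdecomp : l.reverse = (l.drop (i + 1)).reverse ++ ([t] ++ (l.take i).reverse) := by
    conv_lhs => rw [← List.take_append_drop i l, List.drop_eq_getElem_cons hi, ht]
    rw [List.reverse_append, List.reverse_cons, List.append_assoc]
  have e1 : revDfsSeq [node l] = l.length :: revDfsSeq l.reverse := by
    rw [revDfsSeq_cons, List.append_nil]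
  have e2 : revDfsSeq l.reverse
      = revDfsSeq ((l.drop (i + 1)).reverse)
        ++ (revDfsSeq [t] ++ revDfsSeq ((l.take i).reverse)) := by
    rw [hdecomp, revDfsSeq_append, revDfsSeq_append]
  have hlt : (revDfsSeq ((l.drop (i + 1)).reverse)).length
      = ((l.drop (i + 1)).map size).sum := by
    rw [length_revDfsSeq, List.map_reverse, List.sum_reverse]
  have hm : revIdx t p ≤ (revDfsSeq [t]).length := by
    rw [length_revDfsSeq]
    simpa using revIdx_le_size t p
  have e3 : queue (revDfsSeq l.reverse) (((l.drop (i + 1)).map size).sum + revIdx t p)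
      = (1 - ((l.length : ℤ) - (i + 1))) + queue (revDfsSeq [t]) (revIdx t p) - 1 := by
    rw [e2, ← hlt, queue_append_full, queue_append_left _ _ _ hm, hlt]
    rw [show ((l.drop (i + 1)).map size).sum = (((l.drop (i + 1)).reverse).map size).sum by
      rw [List.map_reverse, List.sum_reverse]]
    rw [queue_rev_full, List.length_reverse, List.length_drop]
    have : ((l.length - (i + 1) : ℕ) : ℤ) = (l.length : ℤ) - (i + 1) := by omega
    rw [this]
  rw [revIdx_cons h p, e1,
    show 1 + ((l.drop (i + 1)).map size).sum + revIdx t p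
      = (((l.drop (i + 1)).map size).sum + revIdx t p) + 1 by omega,
    queue_cons, e3]
  ring

theorem queue_one (s : List ℕ) : 0 ≤ queue s 1 := by
  unfold queue
  rw [Finset.sum_range_one]
  omega

theorem key : ∀ (u : List ℕ) (T : PlaneTree),
    (∀ (p : List ℕ) (l : List PlaneTree),
      subtreeAt T p = some (PlaneTree.node l) → l.length ≠ 1) →
    (subtreeAt T u).isSome →
    (u.length : ℤ) ≤ queue (lexDfsSeq [T]) (lexIdx T u) + queue (revDfsSeq [T]) (revIdx T u) := by
  intro u
  induction u with
  | nil =>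
    intro T _ _
    rw [lexIdx_nil, revIdx_nil]
    have := queue_one (lexDfsSeq [T])
    have := queue_one (revDfsSeq [T])
    simp only [List.length_nil, Nat.cast_zero]
    omega
  | cons i p IH =>
    intro T hone hu
    obtain ⟨l⟩ := T
    obtain ⟨t, h, htp⟩ := isSome_subtreeAt_cons.mp hu
    have hi : i < l.length := (List.getElem?_eq_some_iff.mp h).1
    have hlen : l.length ≠ 1 := hone [] l (subtreeAt_nil _)
    have honet : ∀ (p' : List ℕ) (l' : List PlaneTree),
        subtreeAt t p' = some (PlaneTree.node l') → l'.length ≠ 1 := fun p' l' hh =>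
      hone (i :: p') l' (by rw [subtreeAt_cons_some h]; exact hh)
    have IH' := IH t honet htp
    rw [queue_lex_cons h p, queue_rev_cons h p]
    simp only [List.length_cons]
    push_cast
    omega


end PlaneTree

open PlaneTree in
/-- For a plane tree in which no node has exactly one child, and any node `u`,
the lex-DFS and rev-DFS queue lengths at `u` satisfy
`max(Q^l_{λ(u)}, Q^r_{ρ(u)}) ≥ |u|/2`, where `|u|` is the depth of `u`. -/
theorem stmt14 (T : PlaneTree)
    (hone : ∀ (p : List ℕ) (l : List PlaneTree),
      subtreeAt T p = some (PlaneTree.node l) → l.length ≠ 1)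
    (u : List ℕ) (hu : (subtreeAt T u).isSome) :
    (u.length : ℝ) / 2 ≤
      max ((queue (lexDfsSeq [T]) (lexIdx T u) : ℝ))
        ((queue (revDfsSeq [T]) (revIdx T u) : ℝ)) := by
  have hkey := key u T hone hu
  have h1 : ((queue (lexDfsSeq [T]) (lexIdx T u) : ℤ) : ℝ)
      ≤ max ((queue (lexDfsSeq [T]) (lexIdx T u) : ℝ)) ((queue (revDfsSeq [T]) (revIdx T u) : ℝ)) :=
    le_max_left _ _
  have h2 : ((queue (revDfsSeq [T]) (revIdx T u) : ℤ) : ℝ)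
      ≤ max ((queue (lexDfsSeq [T]) (lexIdx T u) : ℝ)) ((queue (revDfsSeq [T]) (revIdx T u) : ℝ)) :=
    le_max_right _ _
  have hcast : (u.length : ℝ) ≤ ((queue (lexDfsSeq [T]) (lexIdx T u) : ℤ) : ℝ)
      + ((queue (revDfsSeq [T]) (revIdx T u) : ℤ) : ℝ) := by
    exact_mod_cast hkey
  linarith
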